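/- Let n ≥ 1, let f : [0,1]^n → [0,1] be any deterministic mechanism whose output always satisfies 2-IFS with respect to the reported profile (i.e., |f(x') − x_i'| ≥ 1/(2n) for every reported profile x' and every i), and let ε ∈ (0, 1/(2n)). Then for every true profile x ∈ [0,1]^n and every reported profile x' that is a pure ε-Nash equilibrium with respect to x, we have ∑_i |f(x) − x_i| ≤ (2n/(1 − 2nε)) · ∑_i |f(x') − x_i|. In particular, the ε-price of anarchy of f*_{2IFS} and f*_{2UFS} for utilitarian welfare is at most 2n/(1 − 2nε). -/

import Mathlib

/-- The ε-price of anarchy for utilitarian welfare of any mechanism whose output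
always satisfies 2-IFS with respect to the reported profile is at most
`2n / (1 - 2nε)` for `ε ∈ (0, 1/(2n))`. -/
theorem eps_price_of_anarchy_upper (n : ℕ) (hn : 1 ≤ n) (f : (Fin n → ℝ) → ℝ)
    (hf : ∀ x' : Fin n → ℝ, (∀ i, x' i ∈ Set.Icc (0:ℝ) 1) →
      f x' ∈ Set.Icc (0:ℝ) 1 ∧ ∀ i, 1 / (2 * n) ≤ |f x' - x' i|)
    (ε : ℝ) (hε : 0 < ε) (hε' : ε < 1 / (2 * n))
    (x : Fin n → ℝ) (hx : ∀ i, x i ∈ Set.Icc (0:ℝ) 1)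
    (x' : Fin n → ℝ) (hx' : ∀ i, x' i ∈ Set.Icc (0:ℝ) 1)
    (hNE : ∀ (i : Fin n) (z : ℝ), z ∈ Set.Icc (0:ℝ) 1 →
      |f (Function.update x' i z) - x i| ≤ |f x' - x i| + ε) :
    ∑ i, |f x - x i| ≤ (2 * n / (1 - 2 * n * ε)) * ∑ i, |f x' - x i| := by
  have hn0 : (0:ℝ) < n := by exact_mod_cast hn
  have hden : 0 < 1 - 2 * (n:ℝ) * ε := by
    have h2n : (0:ℝ) < 2 * n := by positivity
    have := (lt_div_iff₀ h2n).mp hε'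
    nlinarith
  -- lower bound on each equilibrium term
  have hterm : ∀ i : Fin n, 1 / (2 * (n:ℝ)) - ε ≤ |f x' - x i| := by
    intro i
    have hupd : ∀ j, Function.update x' i (x i) j ∈ Set.Icc (0:ℝ) 1 := by
      intro j
      rcases eq_or_ne j i with rfl | hji
      · simpa using hx j
      · simpa [Function.update_of_ne hji] using hx' j
    have h1 := (hf _ hupd).2 i
    rw [Function.update_self] at h1
    have h2 := hNE i (x i) (hx i)
    linarith
  have hS : (1 - 2 * (n:ℝ) * ε) / 2 ≤ ∑ i, |f x' - x i| := by
    calc (1 - 2 * (n:ℝ) * ε) / 2 = n * (1 / (2 * (n:ℝ)) - ε) := by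
          field_simp
      _ = ∑ _i : Fin n, (1 / (2 * (n:ℝ)) - ε) := by
          rw [Finset.sum_const, Finset.card_fin]; push_cast; ring
      _ ≤ ∑ i, |f x' - x i| := Finset.sum_le_sum fun i _ => hterm i
  have hL : ∑ i, |f x - x i| ≤ (n:ℝ) := by
    calc ∑ i, |f x - x i| ≤ ∑ _i : Fin n, (1:ℝ) := by
          refine Finset.sum_le_sum fun i _ => ?_
          have h1 := (hf x hx).1
          have h2 := hx i
          rw [abs_le]
          constructor <;> [linarith [h1.1, h2.2]; linarith [h1.2, h2.1]]
      _ = n := by simp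
  have hcoef : 0 < 2 * (n:ℝ) / (1 - 2 * n * ε) := by positivity
  calc ∑ i, |f x - x i| ≤ (n:ℝ) := hL
    _ = (2 * n / (1 - 2 * n * ε)) * ((1 - 2 * (n:ℝ) * ε) / 2) := by
        field_simp
        exact (div_self (ne_of_gt (by linarith))).symm
    _ ≤ (2 * n / (1 - 2 * n * ε)) * ∑ i, |f x' - x i| :=
        mul_le_mul_of_nonneg_left hS hcoef.le
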